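/- Let V be a finite nonempty type, p : V → ℝ a probability mass function with full support, g : V → ℝ and η > 0. Then sSup { Σ_v q(v)·g(v) : q a probability mass function on V with KL(q,p) ≤ η } = ⨅_{α > 0} ( α·η + α·log( Σ_v p(v)·exp(g(v)/α) ) ). That is, the KL-ball distributionally robust maximization over radius η equals the one-dimensional dual infimum over α > 0. -/

import Mathlib

open Real Finset Filter Topology

section klHelpers
set_option linter.unusedSectionVars false
set_option linter.unusedVariables false
variable {V : Type*} [Fintype V] [Nonempty V]

private lemma kl_sum_exp_pos (p : V → ℝ) (hp_pos : ∀ v, 0 < p v) (f : V → ℝ) :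
    0 < ∑ v, p v * Real.exp (f v) :=
  Finset.sum_pos (fun v _ => mul_pos (hp_pos v) (Real.exp_pos _)) Finset.univ_nonempty

private lemma kl_gibbs_nonneg (q r : V → ℝ) (hq0 : ∀ v, 0 ≤ q v) (hr : ∀ v, 0 < r v)
    (hq1 : ∑ v, q v = 1) (hr1 : ∑ v, r v = 1) :
    0 ≤ ∑ v, q v * Real.log (q v / r v) := by
  have key : ∀ v, q v - r v ≤ q v * Real.log (q v / r v) := by
    intro v
    rcases eq_or_lt_of_le (hq0 v) with h | h
    · simp [← h]; linarith [(hr v).le]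
    · have h1 : Real.log (r v / q v) ≤ r v / q v - 1 :=
        Real.log_le_sub_one_of_pos (div_pos (hr v) h)
      have h2 : Real.log (q v / r v) = - Real.log (r v / q v) := by
        rw [← Real.log_inv]; congr 1; field_simp
      have h3 : 1 - r v / q v ≤ Real.log (q v / r v) := by rw [h2]; linarith
      have h4 := mul_le_mul_of_nonneg_left h3 (hq0 v)
      calc q v - r v = q v * (1 - r v / q v) := by field_simp
        _ ≤ q v * Real.log (q v / r v) := h4
  calc (0:ℝ) = ∑ v, (q v - r v) := by rw [Finset.sum_sub_distrib, hq1, hr1]; ring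
    _ ≤ _ := Finset.sum_le_sum fun v _ => key v

private lemma kl_dv_ineq (p : V → ℝ) (hp_pos : ∀ v, 0 < p v)
    (q : V → ℝ) (hq0 : ∀ v, 0 ≤ q v) (hq1 : ∑ v, q v = 1) (h : V → ℝ) :
    ∑ v, q v * h v ≤ (∑ v, q v * Real.log (q v / p v)) +
      Real.log (∑ v, p v * Real.exp (h v)) := by
  set Z := ∑ v, p v * Real.exp (h v) with hZ
  have hZpos : 0 < Z := kl_sum_exp_pos p hp_pos h
  set r : V → ℝ := fun v => p v * Real.exp (h v) / Z with hr
  have hrpos : ∀ v, 0 < r v := fun v => div_pos (mul_pos (hp_pos v) (Real.exp_pos _)) hZpos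
  have hr1 : ∑ v, r v = 1 := by rw [← Finset.sum_div]; field_simp; exact hZ.symm
  have key := kl_gibbs_nonneg q r hq0 hrpos hq1 hr1
  have expand : ∀ v, q v * Real.log (q v / r v)
      = q v * Real.log (q v / p v) - q v * h v + q v * Real.log Z := by
    intro v
    rcases eq_or_lt_of_le (hq0 v) with hv | hv
    · simp [← hv]
    · have h1 : q v / r v = (q v / p v) * Real.exp (- h v) * Z := by
        rw [hr, Real.exp_neg]; field_simp
      rw [h1, Real.log_mul (mul_ne_zero (div_pos hv (hp_pos v)).ne' (Real.exp_ne_zero _)) hZpos.ne',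
        Real.log_mul (div_pos hv (hp_pos v)).ne' (Real.exp_ne_zero _), Real.log_exp]
      ring
  rw [Finset.sum_congr rfl (fun v _ => expand v)] at key
  rw [Finset.sum_add_distrib, Finset.sum_sub_distrib, ← Finset.sum_mul, hq1, one_mul] at key
  linarith

private lemma kl_weak_duality (p : V → ℝ) (hp_pos : ∀ v, 0 < p v)
    (q : V → ℝ) (hq0 : ∀ v, 0 ≤ q v) (hq1 : ∑ v, q v = 1)
    (g : V → ℝ) (η : ℝ) (hKL : ∑ v, q v * Real.log (q v / p v) ≤ η)
    (α : ℝ) (hα : 0 < α) :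
    ∑ v, q v * g v ≤ α * η + α * Real.log (∑ v, p v * Real.exp (g v / α)) := by
  have h0 := kl_dv_ineq p hp_pos q hq0 hq1 (fun v => g v / α)
  have h2 : ∑ v, q v * (g v / α) = (∑ v, q v * g v) / α := by
    rw [Finset.sum_div]; exact Finset.sum_congr rfl fun v _ => by ring
  rw [h2] at h0
  have h3 := mul_le_mul_of_nonneg_left h0 hα.le
  rw [mul_div_cancel₀ _ hα.ne'] at h3
  nlinarith

private lemma kl_tendsto_A (p : V → ℝ) (g : V → ℝ) (M : ℝ) (hM : ∀ v, g v ≤ M) :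
    Tendsto (fun β : ℝ => ∑ v, p v * Real.exp (β * (g v - M))) atTop
      (𝓝 (∑ v ∈ Finset.univ.filter (fun v => g v = M), p v)) := by
  have h0 : (∑ v ∈ Finset.univ.filter (fun v => g v = M), p v)
      = ∑ v, (if g v = M then p v else 0) := by rw [Finset.sum_filter]
  rw [h0]
  apply tendsto_finset_sum
  intro v _
  by_cases hv : g v = M
  · simp only [hv, sub_self, mul_zero, Real.exp_zero, mul_one, if_pos]
    exact tendsto_const_nhds
  · rw [if_neg hv]
    have hc : g v - M < 0 := sub_neg.mpr (lt_of_le_of_ne (hM v) hv)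
    have h1 : Tendsto (fun β : ℝ => β * (g v - M)) atTop atBot :=
      Tendsto.atTop_mul_const_of_neg hc tendsto_id
    have h2 := Real.tendsto_exp_atBot.comp h1
    simpa using h2.const_mul (p v)

private lemma kl_tendsto_B (p : V → ℝ) (g : V → ℝ) (M : ℝ) (hM : ∀ v, g v ≤ M) :
    Tendsto (fun β : ℝ => ∑ v, p v * (β * (g v - M)) * Real.exp (β * (g v - M)))
      atTop (𝓝 0) := by
  have h0 : (0:ℝ) = ∑ v : V, (0:ℝ) := by simp
  rw [h0]
  apply tendsto_finset_sum
  intro v _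
  by_cases hv : g v = M
  · simp [hv]
  · have hc : g v - M < 0 := sub_neg.mpr (lt_of_le_of_ne (hM v) hv)
    have h1 : Tendsto (fun β : ℝ => β * (-(g v - M))) atTop atTop :=
      Tendsto.atTop_mul_const (by linarith) tendsto_id
    have h2 := (Real.tendsto_pow_mul_exp_neg_atTop_nhds_zero 1).comp h1
    have h3 := h2.const_mul (-(p v))
    rw [mul_zero] at h3
    refine h3.congr fun β => ?_
    simp only [Function.comp_apply, pow_one]
    ring_nf

private lemma kl_identity (p : V → ℝ) (hp_pos : ∀ v, 0 < p v) (g : V → ℝ) (β : ℝ) :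
    ∑ v, (p v * Real.exp (β * g v) / (∑ w, p w * Real.exp (β * g w)))
        * Real.log ((p v * Real.exp (β * g v) / (∑ w, p w * Real.exp (β * g w))) / p v)
      = β * (∑ v, (p v * Real.exp (β * g v) / (∑ w, p w * Real.exp (β * g w))) * g v)
        - Real.log (∑ w, p w * Real.exp (β * g w)) := by
  set Z := ∑ w, p w * Real.exp (β * g w) with hZ
  have hZpos : 0 < Z := kl_sum_exp_pos p hp_pos _
  have hterm : ∀ v, (p v * Real.exp (β * g v) / Z) * Real.log ((p v * Real.exp (β * g v) / Z) / p v)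
      = (p v * Real.exp (β * g v) / Z) * (β * g v - Real.log Z) := by
    intro v
    congr 1
    have h5 : (p v * Real.exp (β * g v) / Z) / p v = Real.exp (β * g v) / Z := by
      rw [div_div, mul_comm Z (p v), ← div_div]
      congr 1
      exact mul_div_cancel_left₀ _ (hp_pos v).ne'
    rw [h5, Real.log_div (Real.exp_ne_zero _) hZpos.ne', Real.log_exp]
  rw [Finset.sum_congr rfl fun v _ => hterm v]
  have hsum1 : ∑ v, p v * Real.exp (β * g v) / Z = 1 := by
    rw [← Finset.sum_div]; field_simp; exact hZ.symm
  have h6 : ∀ v, (p v * Real.exp (β * g v) / Z) * (β * g v - Real.log Z)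
      = β * ((p v * Real.exp (β * g v) / Z) * g v)
        - Real.log Z * (p v * Real.exp (β * g v) / Z) := by intro v; ring
  rw [Finset.sum_congr rfl fun v _ => h6 v, Finset.sum_sub_distrib,
    ← Finset.mul_sum, ← Finset.mul_sum, hsum1]
  ring

private lemma kl_cont (p : V → ℝ) (hp_pos : ∀ v, 0 < p v) (g : V → ℝ) :
    Continuous (fun β : ℝ => ∑ v, (p v * Real.exp (β * g v) / (∑ w, p w * Real.exp (β * g w)))
        * Real.log ((p v * Real.exp (β * g v) / (∑ w, p w * Real.exp (β * g w))) / p v)) := by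
  have hZpos : ∀ β : ℝ, 0 < ∑ w, p w * Real.exp (β * g w) := fun β => kl_sum_exp_pos p hp_pos _
  have hZcont : Continuous (fun β : ℝ => ∑ w, p w * Real.exp (β * g w)) := by
    apply continuous_finset_sum; intro w _; fun_prop
  have heq : (fun β : ℝ => ∑ v, (p v * Real.exp (β * g v) / (∑ w, p w * Real.exp (β * g w)))
        * Real.log ((p v * Real.exp (β * g v) / (∑ w, p w * Real.exp (β * g w))) / p v))
      = fun β : ℝ => β * (∑ v, (p v * Real.exp (β * g v) / (∑ w, p w * Real.exp (β * g w))) * g v)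
        - Real.log (∑ w, p w * Real.exp (β * g w)) := by
    funext β; exact kl_identity p hp_pos g β
  rw [heq]
  apply Continuous.sub
  · apply continuous_id.mul
    apply continuous_finset_sum; intro v _
    exact ((((continuous_const.mul (continuous_id.mul continuous_const).rexp)).div hZcont
      (fun β => (hZpos β).ne')).mul continuous_const)
  · exact hZcont.log (fun β => (hZpos β).ne')

private lemma kl_eq_BA (p : V → ℝ) (hp_pos : ∀ v, 0 < p v) (g : V → ℝ) (M : ℝ) (β : ℝ) :
    β * (∑ v, (p v * Real.exp (β * g v) / (∑ w, p w * Real.exp (β * g w))) * g v)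
        - Real.log (∑ w, p w * Real.exp (β * g w))
      = (∑ v, p v * (β * (g v - M)) * Real.exp (β * (g v - M)))
          / (∑ v, p v * Real.exp (β * (g v - M)))
        - Real.log (∑ v, p v * Real.exp (β * (g v - M))) := by
  set Z := ∑ w, p w * Real.exp (β * g w) with hZ
  have hZpos : 0 < Z := kl_sum_exp_pos p hp_pos _
  set S₁ := ∑ v, p v * g v * Real.exp (β * g v) with hS₁
  have hexp : ∀ v, Real.exp (β * (g v - M)) = Real.exp (β * g v) * Real.exp (-(β * M)) := by
    intro v; rw [← Real.exp_add]; congr 1; ring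
  have hA : (∑ v, p v * Real.exp (β * (g v - M))) = Real.exp (-(β * M)) * Z := by
    rw [hZ, Finset.mul_sum]
    exact Finset.sum_congr rfl fun v _ => by rw [hexp v]; ring
  have hB : (∑ v, p v * (β * (g v - M)) * Real.exp (β * (g v - M)))
      = Real.exp (-(β * M)) * (β * S₁ - β * M * Z) := by
    have hrhs : Real.exp (-(β * M)) * (β * S₁ - β * M * Z)
        = ∑ v, Real.exp (-(β * M)) * (β * (p v * g v * Real.exp (β * g v))
            - β * M * (p v * Real.exp (β * g v))) := by
      rw [hS₁, hZ, Finset.mul_sum, Finset.mul_sum, ← Finset.sum_sub_distrib, ← Finset.mul_sum]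
    rw [hrhs]
    exact Finset.sum_congr rfl fun v _ => by rw [hexp v]; ring
  have hq : (∑ v, (p v * Real.exp (β * g v) / Z) * g v) = S₁ / Z := by
    rw [hS₁, Finset.sum_div]
    exact Finset.sum_congr rfl fun v _ => by ring
  rw [hA, hB, hq, Real.log_mul (Real.exp_ne_zero _) hZpos.ne', Real.log_exp,
    mul_div_mul_left _ _ (Real.exp_ne_zero _)]
  field_simp
  ring

private lemma kl_le_slope (p : V → ℝ) (hp_pos : ∀ v, 0 < p v) (hp_sum : ∑ v, p v = 1)
    (g : V → ℝ) (M m : ℝ) (hM : ∀ v, g v ≤ M) (hm : ∀ v, m ≤ g v) (β : ℝ) (hβ : 0 ≤ β) :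
    β * (∑ v, (p v * Real.exp (β * g v) / (∑ w, p w * Real.exp (β * g w))) * g v)
        - Real.log (∑ w, p w * Real.exp (β * g w)) ≤ β * (M - m) := by
  set Z := ∑ w, p w * Real.exp (β * g w) with hZ
  have hZpos : 0 < Z := kl_sum_exp_pos p hp_pos _
  have hsum1 : ∑ v, p v * Real.exp (β * g v) / Z = 1 := by
    rw [← Finset.sum_div]; field_simp; exact hZ.symm
  have h1 : (∑ v, (p v * Real.exp (β * g v) / Z) * g v) ≤ M := by
    calc (∑ v, (p v * Real.exp (β * g v) / Z) * g v)
        ≤ ∑ v, (p v * Real.exp (β * g v) / Z) * M :=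
          Finset.sum_le_sum fun v _ => mul_le_mul_of_nonneg_left (hM v)
            (le_of_lt (div_pos (mul_pos (hp_pos v) (Real.exp_pos _)) hZpos))
      _ = M := by rw [← Finset.sum_mul, hsum1, one_mul]
  have h2 : β * m ≤ Real.log Z := by
    have h2' : Real.exp (β * m) ≤ Z := by
      calc Real.exp (β * m) = ∑ v, p v * Real.exp (β * m) := by
            rw [← Finset.sum_mul, hp_sum, one_mul]
        _ ≤ Z := Finset.sum_le_sum fun v _ => mul_le_mul_of_nonneg_left
            (Real.exp_le_exp.mpr (mul_le_mul_of_nonneg_left (hm v) hβ)) (hp_pos v).le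
    calc β * m = Real.log (Real.exp (β * m)) := (Real.log_exp _).symm
      _ ≤ Real.log Z := Real.log_le_log (Real.exp_pos _) h2'
  have h3 : β * (∑ v, (p v * Real.exp (β * g v) / Z) * g v) ≤ β * M :=
    mul_le_mul_of_nonneg_left h1 hβ
  linarith

/-- the dual value is at most `α * η + M` where `M` bounds `g`. -/
private lemma kl_dual_le (p : V → ℝ) (hp_pos : ∀ v, 0 < p v) (hp_sum : ∑ v, p v = 1)
    (g : V → ℝ) (M : ℝ) (hM : ∀ v, g v ≤ M) (α : ℝ) (hα : 0 < α) :
    α * Real.log (∑ v, p v * Real.exp (g v / α)) ≤ M := by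
  have hle : (∑ v, p v * Real.exp (g v / α)) ≤ Real.exp (M / α) := by
    calc (∑ v, p v * Real.exp (g v / α)) ≤ ∑ v, p v * Real.exp (M / α) :=
        Finset.sum_le_sum fun v _ => mul_le_mul_of_nonneg_left
          (Real.exp_le_exp.mpr (by gcongr; exact hM v)) (hp_pos v).le
      _ = Real.exp (M / α) := by rw [← Finset.sum_mul, hp_sum, one_mul]
  have hlog : Real.log (∑ v, p v * Real.exp (g v / α)) ≤ M / α :=
    (Real.log_le_log (kl_sum_exp_pos p hp_pos _) hle).trans_eq (Real.log_exp _)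
  calc α * Real.log (∑ v, p v * Real.exp (g v / α)) ≤ α * (M / α) :=
      mul_le_mul_of_nonneg_left hlog hα.le
    _ = M := by field_simp

end klHelpers

/-- Strong duality for KL-ball DRO on a finite space: the robust maximization of
`E_q[g]` over pmfs `q` with `KL(q,p) ≤ η` equals the one-dimensional dual
infimum `⨅_{α>0} ( α·η + α·log E_p[exp(g/α)] )`. -/
theorem kl_dro_strong_duality
    {V : Type*} [Fintype V] [Nonempty V]
    (p : V → ℝ) (hp_pos : ∀ v, 0 < p v) (hp_sum : ∑ v, p v = 1)
    (g : V → ℝ) (η : ℝ) (hη : 0 < η) :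
    sSup {s : ℝ | ∃ q : V → ℝ, (∀ v, 0 ≤ q v) ∧ (∑ v, q v = 1) ∧
        (∑ v, q v * Real.log (q v / p v) ≤ η) ∧ s = ∑ v, q v * g v}
      = ⨅ α : {a : ℝ // 0 < a},
          ((α : ℝ) * η + (α : ℝ) * Real.log (∑ v, p v * Real.exp (g v / (α : ℝ)))) := by
  set Sset := {s : ℝ | ∃ q : V → ℝ, (∀ v, 0 ≤ q v) ∧ (∑ v, q v = 1) ∧
      (∑ v, q v * Real.log (q v / p v) ≤ η) ∧ s = ∑ v, q v * g v} with hSset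
  set F : {a : ℝ // 0 < a} → ℝ := fun α =>
      (α : ℝ) * η + (α : ℝ) * Real.log (∑ v, p v * Real.exp (g v / (α : ℝ))) with hF
  -- p itself is feasible
  have hpKL : ∑ v, p v * Real.log (p v / p v) = 0 := by
    apply Finset.sum_eq_zero
    intro v _
    rw [div_self (hp_pos v).ne', Real.log_one, mul_zero]
  have hpmem : (∑ v, p v * g v) ∈ Sset := ⟨p, fun v => (hp_pos v).le, hp_sum,
      by rw [hpKL]; exact hη.le, rfl⟩
  have hSne : Sset.Nonempty := ⟨_, hpmem⟩
  -- weak duality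
  have hub : ∀ s ∈ Sset, ∀ α : {a : ℝ // 0 < a}, s ≤ F α := by
    rintro s ⟨q, hq0, hq1, hqKL, rfl⟩ α
    exact kl_weak_duality p hp_pos q hq0 hq1 g η hqKL α α.2
  have hbddS : BddAbove Sset := ⟨F ⟨1, one_pos⟩, fun s hs => hub s hs _⟩
  have hbddF : BddBelow (Set.range F) := by
    refine ⟨∑ v, p v * g v, ?_⟩
    rintro _ ⟨α, rfl⟩
    exact hub _ hpmem α
  -- the max of g and the mass of its argmax
  set M := Finset.univ.sup' Finset.univ_nonempty g with hMdef
  have hM : ∀ v, g v ≤ M := fun v => Finset.le_sup' g (Finset.mem_univ v)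
  obtain ⟨v₀, -, hv₀⟩ := Finset.exists_mem_eq_sup' Finset.univ_nonempty g
  set pS := ∑ v ∈ Finset.univ.filter (fun v => g v = M), p v with hpSdef
  have hpS : 0 < pS :=
    Finset.sum_pos (fun v _ => hp_pos v)
      ⟨v₀, Finset.mem_filter.mpr ⟨Finset.mem_univ _, hv₀.symm⟩⟩
  -- sSup ≤ iInf
  refine le_antisymm (le_ciInf fun α => csSup_le hSne fun s hs => hub s hs α) ?_
  -- iInf ≤ sSup
  by_cases hcase : -Real.log pS ≤ η
  · -- non-binding case : the conditional of p on the argmax of g is feasible, value M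
    set q : V → ℝ := fun v => if g v = M then p v / pS else 0 with hq
    have hq0 : ∀ v, 0 ≤ q v := by
      intro v; rw [hq]; dsimp only
      split
      · exact (div_pos (hp_pos v) hpS).le
      · exact le_refl 0
    have hq1 : ∑ v, q v = 1 := by
      rw [hq]
      rw [← Finset.sum_filter, ← Finset.sum_div, ← hpSdef, div_self hpS.ne']
    have hqKL : ∑ v, q v * Real.log (q v / p v) = -Real.log pS := by
      have hterm : ∀ v, q v * Real.log (q v / p v)
          = if g v = M then (p v / pS) * (-Real.log pS) else 0 := by
        intro v
        rw [hq]; dsimp only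
        split
        · congr 1
          rw [div_right_comm, div_self (hp_pos v).ne', one_div, Real.log_inv]
        · simp
      rw [Finset.sum_congr rfl fun v _ => hterm v, ← Finset.sum_filter, ← Finset.sum_mul,
        ← Finset.sum_div, ← hpSdef, div_self hpS.ne', one_mul]
    have hqval : ∑ v, q v * g v = M := by
      have hterm : ∀ v, q v * g v = if g v = M then (p v / pS) * M else 0 := by
        intro v
        rw [hq]; dsimp only
        by_cases hv : g v = M
        · rw [if_pos hv, if_pos hv, hv]
        · rw [if_neg hv, if_neg hv, zero_mul]
      rw [Finset.sum_congr rfl fun v _ => hterm v, ← Finset.sum_filter, ← Finset.sum_mul,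
        ← Finset.sum_div, ← hpSdef, div_self hpS.ne', one_mul]
    have hMmem : M ∈ Sset := ⟨q, hq0, hq1, by rw [hqKL]; exact hcase, hqval.symm⟩
    have hMle : M ≤ sSup Sset := le_csSup hbddS hMmem
    have hinf : ∀ ε : ℝ, 0 < ε → iInf F ≤ M + ε := by
      intro ε hε
      have hαpos : (0:ℝ) < ε / η := div_pos hε hη
      have h1 : F ⟨ε / η, hαpos⟩ ≤ M + ε := by
        have h2 := kl_dual_le p hp_pos hp_sum g M hM (ε / η) hαpos
        have h3 : (ε / η) * η = ε := div_mul_cancel₀ _ hη.ne'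
        rw [hF]; dsimp only
        rw [h3]
        linarith
      exact (ciInf_le hbddF _).trans h1
    have : iInf F ≤ M := le_of_forall_pos_le_add hinf
    exact this.trans hMle
  · -- binding case
    push_neg at hcase
    -- there is a point strictly below the max
    have hex : ∃ v, g v < M := by
      by_contra hc
      push_neg at hc
      have hall : ∀ v, g v = M := fun v => le_antisymm (hM v) (hc v)
      have : pS = 1 := by
        rw [hpSdef]
        have : Finset.univ.filter (fun v => g v = M) = Finset.univ := by
          apply Finset.filter_true_of_mem; intro v _; exact hall v
        rw [this, hp_sum]
      rw [this, Real.log_one, neg_zero] at hcase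
      exact absurd hcase (not_lt.mpr hη.le)
    obtain ⟨v₁, hv₁⟩ := hex
    set m := Finset.univ.inf' Finset.univ_nonempty g with hmdef
    have hm : ∀ v, m ≤ g v := fun v => Finset.inf'_le g (Finset.mem_univ v)
    have hD : 0 < M - m := by
      have := hm v₁
      linarith
    -- the KL of the Gibbs tilt, as a function of inverse temperature β
    set KLf : ℝ → ℝ := fun β =>
      ∑ v, (p v * Real.exp (β * g v) / (∑ w, p w * Real.exp (β * g w)))
        * Real.log ((p v * Real.exp (β * g v) / (∑ w, p w * Real.exp (β * g w))) / p v)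
      with hKLf
    have hKLtendsto : Tendsto KLf atTop (𝓝 (-Real.log pS)) := by
      have heq : KLf = fun β : ℝ =>
          (∑ v, p v * (β * (g v - M)) * Real.exp (β * (g v - M)))
            / (∑ v, p v * Real.exp (β * (g v - M)))
          - Real.log (∑ v, p v * Real.exp (β * (g v - M))) := by
        funext β
        rw [hKLf]
        dsimp only
        rw [kl_identity p hp_pos g β, kl_eq_BA p hp_pos g M β]
      rw [heq]
      have hA := kl_tendsto_A p g M hM
      have hB := kl_tendsto_B p g M hM
      have hdiv : Tendsto (fun β : ℝ =>
          (∑ v, p v * (β * (g v - M)) * Real.exp (β * (g v - M)))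
            / (∑ v, p v * Real.exp (β * (g v - M)))) atTop (𝓝 (0 / pS)) :=
        hB.div hA hpS.ne'
      have hlog : Tendsto (fun β : ℝ =>
          Real.log (∑ v, p v * Real.exp (β * (g v - M)))) atTop (𝓝 (Real.log pS)) :=
        ((Real.continuousAt_log hpS.ne').tendsto).comp hA
      have := hdiv.sub hlog
      rw [zero_div, zero_sub] at this
      exact this
    -- small β : KL ≤ η
    set β₁ : ℝ := η / (M - m) with hβ₁def
    have hβ₁pos : 0 < β₁ := div_pos hη hD
    have hKLβ₁ : KLf β₁ ≤ η := by
      rw [hKLf]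
      dsimp only
      rw [kl_identity p hp_pos g β₁]
      have := kl_le_slope p hp_pos hp_sum g M m hM hm β₁ hβ₁pos.le
      rw [hβ₁def] at this ⊢
      rw [div_mul_cancel₀ _ hD.ne'] at this
      exact this
    -- large β : KL > η  (from the limit)
    have hev : ∀ᶠ β in atTop, η < KLf β :=
      hKLtendsto.eventually (eventually_gt_nhds hcase)
    obtain ⟨β₀, hβ₀gt, hβ₀ge⟩ := (hev.and (eventually_ge_atTop β₁)).exists
    -- IVT
    have hivt := intermediate_value_Icc hβ₀ge ((kl_cont p hp_pos g).continuousOn (s := Set.Icc β₁ β₀))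
    have hηmem : η ∈ Set.Icc (KLf β₁) (KLf β₀) := ⟨hKLβ₁, hβ₀gt.le⟩
    obtain ⟨β, hβmem, hβeq⟩ := hivt hηmem
    have hβpos : 0 < β := lt_of_lt_of_le hβ₁pos hβmem.1
    -- the optimal Gibbs measure
    set Z := ∑ w, p w * Real.exp (β * g w) with hZ
    have hZpos : 0 < Z := kl_sum_exp_pos p hp_pos _
    set q : V → ℝ := fun v => p v * Real.exp (β * g v) / Z with hq
    have hq0 : ∀ v, 0 ≤ q v := fun v =>
      (div_pos (mul_pos (hp_pos v) (Real.exp_pos _)) hZpos).le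
    have hq1 : ∑ v, q v = 1 := by
      rw [hq]; dsimp only
      rw [← Finset.sum_div, ← hZ, div_self hZpos.ne']
    have hqKL : ∑ v, q v * Real.log (q v / p v) = η := hβeq
    have hqmem : (∑ v, q v * g v) ∈ Sset := ⟨q, hq0, hq1, hqKL.le, rfl⟩
    -- the dual value at α = β⁻¹ equals the primal value of q
    have hid : η = β * (∑ v, q v * g v) - Real.log Z := by
      rw [← hqKL, hq]
      exact kl_identity p hp_pos g β
    have hαpos : (0:ℝ) < β⁻¹ := inv_pos.mpr hβpos
    have hFval : F ⟨β⁻¹, hαpos⟩ = ∑ v, q v * g v := by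
      rw [hF]; dsimp only
      have hZeq : (∑ v, p v * Real.exp (g v / β⁻¹)) = Z := by
        rw [hZ]
        refine Finset.sum_congr rfl fun v _ => ?_
        congr 1
        rw [div_eq_mul_inv, inv_inv, mul_comm]
      rw [hZeq, hid]
      field_simp
      ring
    calc iInf F ≤ F ⟨β⁻¹, hαpos⟩ := ciInf_le hbddF _
      _ = ∑ v, q v * g v := hFval
      _ ≤ sSup Sset := le_csSup hbddS hqmem
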